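/- Let any global minimizer x* of F(x) = ‖x‖₁ - α‖x‖₂ + (1/(2λ))‖x - y‖₂² be given, with y ∈ ℝ^N, λ > 0, α ≥ 0. Then for every x ∈ ℝ^N, F(x*) - F(x) ≤ min(α/(2‖x*‖₂) - 1/(2λ), 0)·‖x* - x‖₂², where by convention α/0 = 0 if α = 0 and α/0 = +∞ (so the min is 0) if α > 0 and x* = 0. -/

import Mathlib

open Finset Filter Set
open scoped RealInnerProductSpace

noncomputable def norm1 {N : ℕ} (x : EuclideanSpace ℝ (Fin N)) : ℝ := ∑ i, |x i|

noncomputable def normInf {N : ℕ} (x : EuclideanSpace ℝ (Fin N)) : ℝ := ⨆ i, |x i|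

noncomputable def Fobj {N : ℕ} (a lam : ℝ) (y x : EuclideanSpace ℝ (Fin N)) : ℝ :=
  norm1 x - a * ‖x‖ + 1 / (2 * lam) * ‖x - y‖ ^ 2

lemma norm1_convex {N : ℕ} (x z : EuclideanSpace ℝ (Fin N)) {t : ℝ} (h0 : 0 ≤ t) (h1 : t ≤ 1) :
    norm1 (x + t • (z - x)) ≤ (1 - t) * norm1 x + t * norm1 z := by
  unfold norm1
  rw [Finset.mul_sum, Finset.mul_sum, ← Finset.sum_add_distrib]
  apply Finset.sum_le_sum
  intro i _
  have h : (x + t • (z - x)) i = (1 - t) * x i + t * z i := by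
    simp [PiLp.add_apply, PiLp.smul_apply, PiLp.sub_apply]; ring
  rw [h]
  calc |(1-t)*x i + t * z i| ≤ |(1-t)*x i| + |t * z i| := abs_add_le _ _
    _ = (1-t)*|x i| + t*|z i| := by
        rw [abs_mul, abs_mul, abs_of_nonneg (by linarith), abs_of_nonneg h0]

lemma quad_expand {N : ℕ} (y xs z : EuclideanSpace ℝ (Fin N)) :
    ‖z - y‖ ^ 2 = ‖xs - y‖ ^ 2 + 2 * ⟪xs - y, z - xs⟫ + ‖z - xs‖ ^ 2 := by
  have h : z - y = (xs - y) + (z - xs) := by abel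
  rw [h, norm_add_sq_real]

theorem main {N : ℕ} (a lam : ℝ) (hlam : 0 < lam) (ha : 0 ≤ a)
    (y xs : EuclideanSpace ℝ (Fin N))
    (hmin : IsMinOn (Fobj a lam y) Set.univ xs)
    (hcase : xs ≠ 0 ∨ a = 0) :
    ∀ x, Fobj a lam y x ≥ Fobj a lam y xs + (1 / (2*lam) - a / (2 * ‖xs‖)) * ‖x - xs‖ ^ 2 := by
  have hmin' : ∀ z, Fobj a lam y xs ≤ Fobj a lam y z := fun z => hmin (Set.mem_univ z)
  obtain ⟨w, hw1, hw2, hw3⟩ :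
      ∃ w : EuclideanSpace ℝ (Fin N),
        a * ⟪w, xs⟫ = a * ‖xs‖ ∧
        (∀ z, a * ⟪w, z⟫ ≤ a * ‖z‖) ∧
        (∀ z, a * ‖z‖ ≤ a * ‖xs‖ + a * ⟪w, z - xs⟫ + (a / (2 * ‖xs‖)) * ‖z - xs‖ ^ 2) := by
    rcases hcase with hxs | ha0
    · have hn : (0:ℝ) < ‖xs‖ := norm_pos_iff.mpr hxs
      have hne : ‖xs‖ ≠ 0 := hn.ne'
      refine ⟨‖xs‖⁻¹ • xs, ?_, ?_, ?_⟩
      · rw [real_inner_smul_left, real_inner_self_eq_norm_sq]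
        congr 1
        rw [sq, ← mul_assoc, inv_mul_cancel₀ hne, one_mul]
      · intro z
        have h1 := real_inner_le_norm (‖xs‖⁻¹ • xs) z
        have hw : ‖(‖xs‖⁻¹ • xs)‖ = 1 := by
          rw [norm_smul, norm_inv, norm_norm, inv_mul_cancel₀ hne]
        rw [hw, one_mul] at h1
        exact mul_le_mul_of_nonneg_left h1 ha
      · intro z
        have key : ‖z‖ ≤ ‖xs‖ + ⟪(‖xs‖⁻¹ • xs), z - xs⟫ + (1 / (2 * ‖xs‖)) * ‖z - xs‖ ^ 2 := by
          have hexp : ‖z‖ ^ 2 = ‖xs‖ ^ 2 + 2 * ⟪xs, z - xs⟫ + ‖z - xs‖ ^ 2 := by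
            have h : z = xs + (z - xs) := by abel
            nth_rewrite 1 [h]
            rw [norm_add_sq_real]
          have hamgm : 2 * ‖xs‖ * ‖z‖ ≤ ‖xs‖ ^ 2 + ‖z‖ ^ 2 := by
            nlinarith [sq_nonneg (‖xs‖ - ‖z‖)]
          rw [real_inner_smul_left]
          set ip := ⟪xs, z - xs⟫ with hip
          set q := ‖z - xs‖ ^ 2 with hq
          have h2r : (0:ℝ) < 2 * ‖xs‖ := by linarith
          have hrhs : 2 * ‖xs‖ * (‖xs‖ + ‖xs‖⁻¹ * ip + 1 / (2 * ‖xs‖) * q)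
              = 2 * ‖xs‖ ^ 2 + 2 * ip + q := by
            field_simp
          have hmul : 2 * ‖xs‖ * ‖z‖ ≤ 2 * ‖xs‖ * (‖xs‖ + ‖xs‖⁻¹ * ip + 1 / (2 * ‖xs‖) * q) := by
            rw [hrhs]
            nlinarith [hexp, hamgm]
          exact (mul_le_mul_iff_of_pos_left h2r).mp hmul
        calc a * ‖z‖ ≤ a * (‖xs‖ + ⟪(‖xs‖⁻¹ • xs), z - xs⟫ + (1 / (2 * ‖xs‖)) * ‖z - xs‖ ^ 2) :=
              mul_le_mul_of_nonneg_left key ha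
          _ = a * ‖xs‖ + a * ⟪(‖xs‖⁻¹ • xs), z - xs⟫ + (a / (2 * ‖xs‖)) * ‖z - xs‖ ^ 2 := by ring
    · exact ⟨0, by simp [ha0], fun z => by simp [ha0], fun z => by simp [ha0]⟩
  obtain ⟨v, hv⟩ : ∃ v : EuclideanSpace ℝ (Fin N), v = lam⁻¹ • (xs - y) - a • w := ⟨_, rfl⟩
  have hinner : ∀ z : EuclideanSpace ℝ (Fin N),
      ⟪v, z⟫ - ⟪v, xs⟫ = lam⁻¹ * ⟪xs - y, z - xs⟫ - a * ⟪w, z - xs⟫ := by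
    intro z
    rw [← inner_sub_right, hv, inner_sub_left, real_inner_smul_left, real_inner_smul_left]
  have hli : lam⁻¹ = 2 * (1 / (2 * lam)) := by field_simp
  -- upper bound via the convex majorant
  have hK : ∀ z, Fobj a lam y z - Fobj a lam y xs ≤
      (norm1 z + ⟪v, z⟫) - (norm1 xs + ⟪v, xs⟫) + 1/(2*lam) * ‖z - xs‖^2 := by
    intro z
    have hq := quad_expand y xs z
    have hsub : a * ‖xs‖ + a * ⟪w, z - xs⟫ ≤ a * ‖z‖ := by
      have h2 := hw2 z
      rw [inner_sub_right] at *
      linarith [hw1]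
    have hin := hinner z
    rw [hli] at hin
    simp only [Fobj]
    rw [hq]
    nlinarith [hsub, hin]
  -- xs minimizes the convex function z ↦ norm1 z + ⟪v, z⟫
  have hHmin : ∀ z, norm1 xs + ⟪v, xs⟫ ≤ norm1 z + ⟪v, z⟫ := by
    intro z
    by_contra hcon
    push_neg at hcon
    obtain ⟨δ, hδ⟩ : ∃ d : ℝ, d = (norm1 xs + ⟪v, xs⟫) - (norm1 z + ⟪v, z⟫) := ⟨_, rfl⟩
    have hδpos : 0 < δ := by rw [hδ]; linarith
    have hzx : z ≠ xs := by
      intro h; rw [h] at hcon; exact lt_irrefl _ hcon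
    obtain ⟨s, hs⟩ : ∃ s : ℝ, s = ‖z - xs‖ ^ 2 := ⟨_, rfl⟩
    have hspos : 0 < s := hs ▸ pow_pos (norm_pos_iff.mpr (sub_ne_zero.mpr hzx)) 2
    obtain ⟨t, ht⟩ : ∃ t : ℝ, t = min 1 (lam * δ / s) := ⟨_, rfl⟩
    have htpos : 0 < t := ht ▸ lt_min one_pos (by positivity)
    have htle : t ≤ 1 := ht ▸ min_le_left _ _
    obtain ⟨p, hp⟩ : ∃ p : EuclideanSpace ℝ (Fin N), p = xs + t • (z - xs) := ⟨_, rfl⟩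
    have hHp : norm1 p + ⟪v, p⟫ ≤
        (norm1 xs + ⟪v, xs⟫) + t * ((norm1 z + ⟪v, z⟫) - (norm1 xs + ⟪v, xs⟫)) := by
      have h1 : norm1 p ≤ (1 - t) * norm1 xs + t * norm1 z :=
        hp ▸ norm1_convex xs z htpos.le htle
      have h2 : ⟪v, p⟫ = ⟪v, xs⟫ + t * ⟪v, z - xs⟫ := by
        rw [hp, inner_add_right, real_inner_smul_right]
      have h3 : ⟪v, z - xs⟫ = ⟪v, z⟫ - ⟪v, xs⟫ := inner_sub_right v z xs
      rw [h2, h3]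
      nlinarith [h1]
    have hnp : ‖p - xs‖ ^ 2 = t ^ 2 * s := by
      rw [hp]
      have h4 : xs + t • (z - xs) - xs = t • (z - xs) := by abel
      rw [h4, norm_smul, mul_pow, hs]
      rw [Real.norm_eq_abs, abs_of_nonneg htpos.le]
    have h0 : 0 ≤ Fobj a lam y p - Fobj a lam y xs := by linarith [hmin' p]
    have hKp := hK p
    rw [hnp] at hKp
    have hchain : 0 ≤ t * (-δ) + 1/(2*lam) * (t^2 * s) := by
      have hd : (norm1 z + ⟪v, z⟫) - (norm1 xs + ⟪v, xs⟫) = -δ := by rw [hδ]; ring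
      rw [hd] at hHp
      linarith
    have hts : t * s ≤ lam * δ := by
      have h1 : t ≤ lam * δ / s := ht ▸ min_le_right _ _
      rwa [le_div_iff₀ hspos] at h1
    have hfin : δ ≤ 1/(2*lam) * (t*s) := by
      have hfac : t * (-δ) + 1/(2*lam) * (t^2 * s) = t * (1/(2*lam)*(t*s) - δ) := by ring
      rw [hfac] at hchain
      nlinarith [htpos]
    have hmono : 1/(2*lam) * (t*s) ≤ 1/(2*lam) * (lam*δ) :=
      mul_le_mul_of_nonneg_left hts (by positivity)
    have heq : 1/(2*lam) * (lam*δ) = δ/2 := by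
      field_simp
    linarith
  -- conclusion
  intro x
  have hq := quad_expand y xs x
  have h3 := hw3 x
  have hH1 := hHmin x
  have hin := hinner x
  rw [hli] at hin
  simp only [Fobj]
  rw [hq]
  rw [inner_sub_right] at h3
  rw [show ⟪w, x - xs⟫ = ⟪w, x⟫ - ⟪w, xs⟫ from inner_sub_right w x xs] at hin
  linarith [h3, hH1, hin]

open scoped Classical

theorem stmt5 {N : ℕ} (a lam : ℝ) (hlam : 0 < lam) (ha : 0 ≤ a)
    (y xs : EuclideanSpace ℝ (Fin N))
    (hmin : IsMinOn (Fobj a lam y) Set.univ xs) :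
    ∀ x, Fobj a lam y xs - Fobj a lam y x ≤
      (if xs = 0 ∧ 0 < a then 0 else min (a / (2 * ‖xs‖) - 1 / (2 * lam)) 0) *
        ‖xs - x‖ ^ 2 := by
  intro x
  have hmin' : Fobj a lam y xs ≤ Fobj a lam y x := hmin (Set.mem_univ x)
  by_cases hc : xs = 0 ∧ 0 < a
  · rw [if_pos hc, zero_mul]
    linarith
  · rw [if_neg hc]
    have hcase : xs ≠ 0 ∨ a = 0 := by
      by_cases h0 : xs = 0
      · right
        rcases ha.lt_or_eq with h | h
        · exact absurd ⟨h0, h⟩ hc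
        · exact h.symm
      · exact Or.inl h0
    have hb := main a lam hlam ha y xs hmin hcase x
    rcases le_or_gt (a / (2 * ‖xs‖) - 1 / (2 * lam)) 0 with h | h
    · rw [min_eq_left h]
      have heq : (a / (2 * ‖xs‖) - 1 / (2 * lam)) * ‖xs - x‖ ^ 2 =
          -((1 / (2 * lam) - a / (2 * ‖xs‖)) * ‖x - xs‖ ^ 2) := by
        rw [norm_sub_rev]
        ring
      rw [heq]
      linarith
    · rw [min_eq_right h.le, zero_mul]
      linarith
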